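/- If (v,w) is a pair of symmetric 4×4 complex matrices satisfying the Plücker relations of G(3,6), then the rank of v is at most 1 if and only if the rank of w is at most 1. -/

import Mathlib

open Matrix

/-- The smaller element `ǐ₁` of the complement of a 2-element subset `{i₁, i₂}`
of `{1,2,3,4}` (indexed by `Fin 4`). -/
def dual₁ (i₁ i₂ : Fin 4) : Fin 4 :=
  (({i₁, i₂}ᶜ : Finset (Fin 4))).min' (by
    rw [← Finset.card_pos, Finset.card_compl]
    have h : ({i₁, i₂} : Finset (Fin 4)).card ≤ 2 :=
      (Finset.card_insert_le _ _).trans (by simp)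
    simp only [Fintype.card_fin]
    omega)

/-- The larger element `ǐ₂` of the complement of a 2-element subset `{i₁, i₂}`
of `{1,2,3,4}` (indexed by `Fin 4`). -/
def dual₂ (i₁ i₂ : Fin 4) : Fin 4 :=
  (({i₁, i₂}ᶜ : Finset (Fin 4))).max' (by
    rw [← Finset.card_pos, Finset.card_compl]
    have h : ({i₁, i₂} : Finset (Fin 4)).card ≤ 2 :=
      (Finset.card_insert_le _ _).trans (by simp)
    simp only [Fintype.card_fin]
    omega)

/-- The sign `ε(I)` of the permutation sending `(1,2,3,4)` to `(i₁,i₂,ǐ₁,ǐ₂)`,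
for `I = {i₁ < i₂}` with complement `Ǐ = {ǐ₁ < ǐ₂}`. -/
noncomputable def eps (i₁ i₂ : Fin 4) : ℂ :=
  if h : Function.Bijective ![i₁, i₂, dual₁ i₁ i₂, dual₂ i₁ i₂] then
    ((Equiv.Perm.sign (Equiv.ofBijective _ h) : ℤ) : ℂ)
  else 0

/-- The 2×2 minor `m[I,J] = m_{i₁j₁}m_{i₂j₂} − m_{i₁j₂}m_{i₂j₁}`. -/
def minor (m : Matrix (Fin 4) (Fin 4) ℂ) (i₁ i₂ j₁ j₂ : Fin 4) : ℂ :=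
  m i₁ j₁ * m i₂ j₂ - m i₁ j₂ * m i₂ j₁

/-- The pair `(v,w)` of symmetric 4×4 complex matrices satisfies the Plücker
relations of `G(3,6)` (the generators of the Plücker ideal of the embedding
`G(3,∧²V₄) ⊂ ℙ(S²V₄ ⊕ S²V₄*)` given by the double spin decomposition):
(i) `v[I,J] = ε(I)ε(J)·w[Ǐ,J̌]` for all 2-element subsets `I, J`, and
(ii) `v·w` has vanishing off-diagonal entries and equal diagonal entries. -/
structure PluckerPair (v w : Matrix (Fin 4) (Fin 4) ℂ) : Prop where
  symm_v : v.IsSymm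
  symm_w : w.IsSymm
  minor_rel : ∀ i₁ i₂ j₁ j₂ : Fin 4, i₁ < i₂ → j₁ < j₂ →
    minor v i₁ i₂ j₁ j₂ =
      eps i₁ i₂ * eps j₁ j₂ *
        minor w (dual₁ i₁ i₂) (dual₂ i₁ i₂) (dual₁ j₁ j₂) (dual₂ j₁ j₂)
  offDiag : ∀ i j : Fin 4, i ≠ j → (v * w) i j = 0
  diag : ∀ i j : Fin 4, (v * w) i i = (v * w) j j

/-- If `(v,w)` satisfies the Plücker relations of `G(3,6)`, then
`rank v ≤ 1 ↔ rank w ≤ 1`. -/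
lemma dual_lt : ∀ i j : Fin 4, i < j → dual₁ i j < dual₂ i j := by decide
lemma dual_invol₁ : ∀ i j : Fin 4, i < j → dual₁ (dual₁ i j) (dual₂ i j) = i := by decide
lemma dual_invol₂ : ∀ i j : Fin 4, i < j → dual₂ (dual₁ i j) (dual₂ i j) = j := by decide
lemma eps_bij : ∀ i j : Fin 4, i < j →
    Function.Bijective ![i, j, dual₁ i j, dual₂ i j] := by decide

lemma eps_ne_zero {i j : Fin 4} (hij : i < j) : eps i j ≠ 0 := by
  rw [eps, dif_pos (eps_bij i j hij)]
  exact_mod_cast Int.cast_ne_zero.mpr (Units.ne_zero _)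

lemma minor_eq_zero_of_forall {M : Matrix (Fin 4) (Fin 4) ℂ}
    (h : ∀ i j k l : Fin 4, M i k * M j l = M i l * M j k) (a b c d : Fin 4) :
    minor M a b c d = 0 := by
  unfold minor; linear_combination h a b c d

lemma forall_of_sorted {M : Matrix (Fin 4) (Fin 4) ℂ}
    (h : ∀ a b c d : Fin 4, a < b → c < d → minor M a b c d = 0) :
    ∀ i j k l : Fin 4, M i k * M j l = M i l * M j k := by
  have key : ∀ i j : Fin 4, i < j → ∀ k l : Fin 4, M i k * M j l = M i l * M j k := by
    intro i j hij k l
    rcases lt_trichotomy k l with h1 | rfl | h1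
    · have := h i j k l hij h1; unfold minor at this; linear_combination this
    · ring
    · have := h i j l k hij h1; unfold minor at this; linear_combination -this
  intro i j k l
  rcases lt_trichotomy i j with h1 | rfl | h1
  · exact key i j h1 k l
  · ring
  · linear_combination -(key j i h1 k l)

lemma rank_le_one_iff_minors (M : Matrix (Fin 4) (Fin 4) ℂ) :
    M.rank ≤ 1 ↔ ∀ i j k l : Fin 4, M i k * M j l = M i l * M j k := by
  rw [Matrix.rank_eq_finrank_span_cols]
  constructor
  · intro hr i j k l
    obtain ⟨v₀, hv₀⟩ := finrank_le_one_iff.mp hr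
    have hc : ∀ c : Fin 4, ∃ t : ℂ, ∀ i, M i c = t * v₀.1 i := by
      intro c
      obtain ⟨t, ht⟩ := hv₀ ⟨Mᵀ c, Submodule.subset_span (Set.mem_range_self c)⟩
      exact ⟨t, fun i => by
        have := congrArg (fun x : (Submodule.span ℂ (Set.range Mᵀ)) => x.1 i) ht
        simpa [Matrix.transpose_apply] using this.symm⟩
    obtain ⟨tk, htk⟩ := hc k
    obtain ⟨tl, htl⟩ := hc l
    rw [htk i, htl j, htl i, htk j]; ring
  · intro hm
    by_cases hM : M = 0
    · subst hM
      rw [show Matrix.col (0 : Matrix (Fin 4) (Fin 4) ℂ) = 0 from rfl, Set.range_zero,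
        Submodule.span_zero_singleton]
      simp
    · obtain ⟨a, b, hab⟩ : ∃ a b, M a b ≠ 0 := by
        by_contra hc
        push_neg at hc
        exact hM (by ext i j; simp [hc])
      have hcols : ∀ c : Fin 4, Mᵀ c = (M a c / M a b) • Mᵀ b := by
        intro c
        funext i
        have := hm i a c b
        simp only [Pi.smul_apply, smul_eq_mul, Matrix.transpose_apply]
        rw [div_mul_eq_mul_div, eq_div_iff hab]
        linear_combination this
      have hspan : Submodule.span ℂ (Set.range Mᵀ) ≤ Submodule.span ℂ {Mᵀ b} := by
        rw [Submodule.span_le]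
        rintro _ ⟨c, rfl⟩
        rw [hcols c]
        exact Submodule.smul_mem _ _ (Submodule.subset_span rfl)
      refine le_trans (Submodule.finrank_mono hspan) ?_
      exact (finrank_span_le_card ({Mᵀ b} : Set (Fin 4 → ℂ))).trans (by simp)

theorem rank_le_one_iff_of_plucker (v w : Matrix (Fin 4) (Fin 4) ℂ) (h : PluckerPair v w) :
    v.rank ≤ 1 ↔ w.rank ≤ 1 := by
  rw [rank_le_one_iff_minors, rank_le_one_iff_minors]
  constructor
  · intro hv
    apply forall_of_sorted
    intro a b c d hab hcd
    have h1 := h.minor_rel (dual₁ a b) (dual₂ a b) (dual₁ c d) (dual₂ c d)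
      (dual_lt a b hab) (dual_lt c d hcd)
    rw [dual_invol₁ a b hab, dual_invol₂ a b hab, dual_invol₁ c d hcd,
      dual_invol₂ c d hcd, minor_eq_zero_of_forall hv] at h1
    have e1 := eps_ne_zero (dual_lt a b hab)
    have e2 := eps_ne_zero (dual_lt c d hcd)
    simpa [mul_eq_zero, e1, e2] using h1.symm
  · intro hw
    apply forall_of_sorted
    intro a b c d hab hcd
    rw [h.minor_rel a b c d hab hcd, minor_eq_zero_of_forall hw, mul_zero]
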